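/- Let R be a local topological ring in which R^× is open and is a topological group in its subspace topology, and fix a topologization of rational points over R. If R is finite-closed, then R is Hausdorff as a topological space. -/

import Mathlib

open AlgebraicGeometry CategoryTheory CategoryTheory.Limits Topology

noncomputable section

/-- `Spec R`, as a scheme, for a commutative ring `R`. -/
abbrev SpecR (R : Type) [CommRing R] : Scheme := Spec (CommRingCat.of R)

/-- The set of `R`-points of a scheme `X` over `Spec R` with structure morphism `f`,
i.e. the set of sections of `f`. -/
def Pts {R : Type} [CommRing R] {X : Scheme} (f : X ⟶ SpecR R) : Type :=
  { s : SpecR R ⟶ X // s ≫ f = 𝟙 (SpecR R) }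

/-- The map on `R`-points induced by a morphism `g` of schemes over `Spec R`. -/
def Pts.map {R : Type} [CommRing R] {X X' : Scheme} {f : X ⟶ SpecR R} {f' : X' ⟶ SpecR R}
    (g : X ⟶ X') (w : g ≫ f' = f) (s : Pts f) : Pts f' :=
  ⟨s.1 ≫ g, by rw [Category.assoc, w, s.2]⟩

/-- Affine `n`-space over `R`. -/
abbrev AffineN (R : Type) [CommRing R] (n : ℕ) : Scheme :=
  Spec (CommRingCat.of (MvPolynomial (Fin n) R))

/-- The structure morphism of affine `n`-space over `R`. -/
def AffineNStr (R : Type) [CommRing R] (n : ℕ) : AffineN R n ⟶ SpecR R :=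
  Spec.map (CommRingCat.ofHom (algebraMap R (MvPolynomial (Fin n) R)))

/-- The canonical identification `𝔸ⁿ(R) = Rⁿ`, sending a section to its coordinates. -/
def affineCoords (R : Type) [CommRing R] (n : ℕ) (s : Pts (AffineNStr R n)) : Fin n → R :=
  fun i => Spec.preimage s.1 (MvPolynomial.X i)

/-- A topologization of rational points over `R`: an assignment of a topology to `X(R)`
for every locally of finite type `R`-scheme `X`, satisfying (i)–(iv). -/
structure PointsTopology (R : Type) [CommRing R] [TopologicalSpace R] : Type 1 where
  /-- the topology on `X(R)` -/
  top : ∀ {X : Scheme} (f : X ⟶ SpecR R), LocallyOfFiniteType f → TopologicalSpace (Pts f)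
  /-- (i) every `R`-morphism induces a continuous map on `R`-points -/
  continuous_map : ∀ {X X' : Scheme} {f : X ⟶ SpecR R} {f' : X' ⟶ SpecR R}
      (hf : LocallyOfFiniteType f) (hf' : LocallyOfFiniteType f') (g : X ⟶ X') (w : g ≫ f' = f),
      letI := top f hf
      letI := top f' hf'
      Continuous (Pts.map g w)
  /-- (ii) the canonical bijection `𝔸ⁿ(R) = Rⁿ` is a homeomorphism -/
  affine_homeo : ∀ (n : ℕ) (h : LocallyOfFiniteType (AffineNStr R n)),
      letI := top (AffineNStr R n) h
      IsHomeomorph (affineCoords R n)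
  /-- (iii) closed immersions induce topological embeddings on `R`-points -/
  closedImmersion_isEmbedding : ∀ {X X' : Scheme} {f : X ⟶ SpecR R} {f' : X' ⟶ SpecR R}
      (hf : LocallyOfFiniteType f) (hf' : LocallyOfFiniteType f') (g : X ⟶ X')
      (w : g ≫ f' = f), IsClosedImmersion g →
      letI := top f hf
      letI := top f' hf'
      IsEmbedding (Pts.map g w)
  /-- (iv) open immersions induce open topological embeddings on `R`-points -/
  openImmersion_isOpenEmbedding : ∀ {X X' : Scheme} {f : X ⟶ SpecR R} {f' : X' ⟶ SpecR R}
      (hf : LocallyOfFiniteType f) (hf' : LocallyOfFiniteType f') (g : X ⟶ X')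
      (w : g ≫ f' = f), IsOpenImmersion g →
      letI := top f hf
      letI := top f' hf'
      IsOpenEmbedding (Pts.map g w)

/-- `R` is étale-open: étale morphisms of locally of finite type `R`-schemes
induce open maps on `R`-points. -/
def EtaleOpen {R : Type} [CommRing R] [TopologicalSpace R] (T : PointsTopology R) : Prop :=
  ∀ {X Y : Scheme} {f : X ⟶ SpecR R} {g : Y ⟶ SpecR R}
    (hf : LocallyOfFiniteType f) (hg : LocallyOfFiniteType g) (φ : X ⟶ Y) (w : φ ≫ g = f),
    IsEtale φ →
    letI := T.top f hf
    letI := T.top g hg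
    IsOpenMap (Pts.map φ w)

/-- `R` is proper-closed: proper morphisms of locally of finite type `R`-schemes
induce closed maps on `R`-points. -/
def ProperClosed {R : Type} [CommRing R] [TopologicalSpace R] (T : PointsTopology R) : Prop :=
  ∀ {X Y : Scheme} {f : X ⟶ SpecR R} {g : Y ⟶ SpecR R}
    (hf : LocallyOfFiniteType f) (hg : LocallyOfFiniteType g) (φ : X ⟶ Y) (w : φ ≫ g = f),
    IsProper φ →
    letI := T.top f hf
    letI := T.top g hg
    IsClosedMap (Pts.map φ w)

/-- `R` is finite-closed: finite morphisms of locally of finite type `R`-schemes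
induce closed maps on `R`-points. -/
def FiniteClosed {R : Type} [CommRing R] [TopologicalSpace R] (T : PointsTopology R) : Prop :=
  ∀ {X Y : Scheme} {f : X ⟶ SpecR R} {g : Y ⟶ SpecR R}
    (hf : LocallyOfFiniteType f) (hg : LocallyOfFiniteType g) (φ : X ⟶ Y) (w : φ ≫ g = f),
    IsFinite φ →
    letI := T.top f hf
    letI := T.top g hg
    IsClosedMap (Pts.map φ w)

/-! ### Auxiliary material -/

/-- Finite-type-ness of the structure morphism of affine `n`-space. -/
lemma affineNStr_lft (R : Type) [CommRing R] (n : ℕ) :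
    LocallyOfFiniteType (AffineNStr R n) := by
  rw [AffineNStr, HasRingHomProperty.Spec_iff (P := @LocallyOfFiniteType)]
  show RingHom.FiniteType (algebraMap R (MvPolynomial (Fin n) R))
  have h : (algebraMap R (MvPolynomial (Fin n) R)).toAlgebra =
      (inferInstance : Algebra R (MvPolynomial (Fin n) R)) :=
    Algebra.algebra_ext _ _ (fun r => rfl)
  unfold RingHom.FiniteType
  rw [h]
  infer_instance

/-- The ring hom `R[X₀,X₁] → R[X₀]` sending both variables to `X₀`. -/
def diagRingHom (R : Type) [CommRing R] :
    MvPolynomial (Fin 2) R →+* MvPolynomial (Fin 1) R :=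
  (MvPolynomial.aeval (fun _ : Fin 2 => (MvPolynomial.X 0 : MvPolynomial (Fin 1) R))).toRingHom

lemma diagRingHom_surjective (R : Type) [CommRing R] :
    Function.Surjective (diagRingHom R) := by
  intro p
  refine ⟨MvPolynomial.rename (fun _ : Fin 1 => (0 : Fin 2)) p, ?_⟩
  show (MvPolynomial.aeval fun _ : Fin 2 => (MvPolynomial.X 0 : MvPolynomial (Fin 1) R))
      (MvPolynomial.rename (fun _ : Fin 1 => (0 : Fin 2)) p) = p
  rw [MvPolynomial.aeval_rename]
  have h : ((fun _ : Fin 2 => (MvPolynomial.X 0 : MvPolynomial (Fin 1) R)) ∘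
      (fun _ : Fin 1 => (0 : Fin 2))) = MvPolynomial.X := by
    funext i; fin_cases i; rfl
  rw [h, MvPolynomial.aeval_X_left_apply]

/-- a local topological ring `R` with `R^×` open and a topological group in
the subspace topology, equipped with a topologization of rational points, is Hausdorff
whenever it is finite-closed. -/
theorem statement_16 (R : Type) [CommRing R] [TopologicalSpace R] [IsTopologicalRing R]
    [IsLocalRing R]
    (hunit : IsOpen {x : R | IsUnit x})
    (hinv : ContinuousOn (fun x : R => Ring.inverse x) {x : R | IsUnit x})
    (T : PointsTopology R) (hT : FiniteClosed T) :
    T2Space R := by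
  classical
  have h1 : LocallyOfFiniteType (AffineNStr R 1) := affineNStr_lft R 1
  have h2 : LocallyOfFiniteType (AffineNStr R 2) := affineNStr_lft R 2
  set ψ : CommRingCat.of (MvPolynomial (Fin 2) R) ⟶ CommRingCat.of (MvPolynomial (Fin 1) R) :=
    CommRingCat.ofHom (diagRingHom R) with hψ
  set g : AffineN R 1 ⟶ AffineN R 2 := Spec.map ψ with hg
  have hci : IsClosedImmersion g :=
    IsClosedImmersion.spec_of_surjective ψ (diagRingHom_surjective R)
  have hfin : IsFinite g := inferInstance
  have w : g ≫ AffineNStr R 2 = AffineNStr R 1 := by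
    rw [hg, AffineNStr, AffineNStr, ← Spec.map_comp]
    congr 1
    have hcomp : (diagRingHom R).comp (algebraMap R (MvPolynomial (Fin 2) R)) =
        algebraMap R (MvPolynomial (Fin 1) R) :=
      RingHom.ext fun r => (MvPolynomial.aeval _).commutes r
    show CommRingCat.ofHom ((diagRingHom R).comp (algebraMap R (MvPolynomial (Fin 2) R))) =
      CommRingCat.ofHom (algebraMap R (MvPolynomial (Fin 1) R))
    exact congrArg CommRingCat.ofHom hcomp
  have hclosed := hT h1 h2 g w hfin
  letI t1 := T.top (AffineNStr R 1) h1
  letI t2 := T.top (AffineNStr R 2) h2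
  have e1 := T.affine_homeo 1 h1
  have e2 := T.affine_homeo 2 h2
  -- the image of `Pts.map g w` under coordinates is the diagonal
  have key : affineCoords R 2 '' (Set.range (Pts.map g w)) = {p : Fin 2 → R | p 0 = p 1} := by
    ext p
    constructor
    · rintro ⟨-, ⟨s, rfl⟩, rfl⟩
      have hs : s.1 = Spec.map (Spec.preimage s.1) := (Spec.map_preimage s.1).symm
      show Spec.preimage (s.1 ≫ g) (MvPolynomial.X 0) =
        Spec.preimage (s.1 ≫ g) (MvPolynomial.X 1)
      have : s.1 ≫ g = Spec.map (ψ ≫ Spec.preimage s.1) := by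
        rw [Spec.map_comp, ← hs, hg]
      rw [this, Spec.preimage_map]
      show Spec.preimage s.1 (diagRingHom R (MvPolynomial.X 0)) =
        Spec.preimage s.1 (diagRingHom R (MvPolynomial.X 1))
      congr 1
      show (MvPolynomial.aeval _) (MvPolynomial.X (0 : Fin 2)) =
        (MvPolynomial.aeval _) (MvPolynomial.X (1 : Fin 2))
      rw [MvPolynomial.aeval_X, MvPolynomial.aeval_X]
    · intro hp
      set r : R := p 0 with hr
      set ev : CommRingCat.of (MvPolynomial (Fin 1) R) ⟶ CommRingCat.of R :=
        CommRingCat.ofHom ((MvPolynomial.aeval (fun _ : Fin 1 => r)).toRingHom) with hev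
      have hsec : Spec.map ev ≫ AffineNStr R 1 = 𝟙 (SpecR R) := by
        rw [AffineNStr, ← Spec.map_comp]
        have hcomp : ((MvPolynomial.aeval (fun _ : Fin 1 => r)).toRingHom).comp
            (algebraMap R (MvPolynomial (Fin 1) R)) = RingHom.id R :=
          RingHom.ext fun x => (MvPolynomial.aeval (fun _ : Fin 1 => r)).commutes x
        have : CommRingCat.ofHom (algebraMap R (MvPolynomial (Fin 1) R)) ≫ ev =
            𝟙 (CommRingCat.of R) := congrArg CommRingCat.ofHom hcomp
        rw [this, Spec.map_id]
      set s : Pts (AffineNStr R 1) := ⟨Spec.map ev, hsec⟩ with hsdef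
      refine ⟨Pts.map g w s, ⟨s, rfl⟩, ?_⟩
      funext i
      have hcoord : ∀ i : Fin 2, affineCoords R 2 (Pts.map g w s) i = r := by
        intro i
        show Spec.preimage (s.1 ≫ g) (MvPolynomial.X i) = r
        have : s.1 ≫ g = Spec.map (ψ ≫ ev) := by
          rw [hsdef, hg, Spec.map_comp]
        rw [this, Spec.preimage_map]
        show (MvPolynomial.aeval (fun _ : Fin 1 => r))
          ((MvPolynomial.aeval fun _ : Fin 2 =>
            (MvPolynomial.X 0 : MvPolynomial (Fin 1) R)) (MvPolynomial.X i)) = r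
        rw [MvPolynomial.aeval_X, MvPolynomial.aeval_X]
      rw [hcoord i]
      fin_cases i
      · exact hr
      · exact hr.trans hp
  -- the diagonal in `Fin 2 → R` is closed
  have hdiagclosed : IsClosed {p : Fin 2 → R | p 0 = p 1} := by
    rw [← key]
    have : affineCoords R 2 '' (Set.range (Pts.map g w)) =
        affineCoords R 2 '' (Pts.map g w '' Set.univ) := by rw [Set.image_univ]
    rw [this]
    exact e2.isClosedMap _ (hclosed _ isClosed_univ)
  -- transfer to `R × R`
  rw [t2_iff_isClosed_diagonal]
  have hcont : Continuous (fun q : R × R => (![q.1, q.2] : Fin 2 → R)) := by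
    apply continuous_pi
    intro i
    fin_cases i
    · exact continuous_fst
    · exact continuous_snd
  have : Set.diagonal R =
      (fun q : R × R => (![q.1, q.2] : Fin 2 → R)) ⁻¹' {p : Fin 2 → R | p 0 = p 1} := by
    ext ⟨a, b⟩
    simp [Set.diagonal, eq_comm]
  rw [this]
  exact hdiagclosed.preimage hcont

end
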